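/- Let X, Y be finite random variables and T(Y) satisfy the Markov chain X–T(Y)–Y. For any auxiliary random variable U with X–Y–U a Markov chain, the Markov chain X–T(Y)–Y–U holds, and consequently I(Y;U) ≥ I(T(Y);U) and H(X|U) is unchanged; in particular every rate pair achievable with Y is achievable with T(Y). -/

import Mathlib

open scoped Classical BigOperators

/-- Probability of a set of outcomes under a pmf `p` on a finite sample space. -/
noncomputable def pr {Ω : Type*} [Fintype Ω] (p : Ω → ℝ) (s : Set Ω) : ℝ :=
  ∑ ω, if ω ∈ s then p ω else 0

/-- `p` is a probability mass function on the finite sample space `Ω`. -/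
def IsPMF {Ω : Type*} [Fintype Ω] (p : Ω → ℝ) : Prop :=
  (∀ ω, 0 ≤ p ω) ∧ (∑ ω, p ω) = 1

/-- The Markov chain `A – B – C`: `A` and `C` are conditionally independent given `B`. -/
def MarkovChain {Ω α β γ : Type*} [Fintype Ω] (p : Ω → ℝ)
    (A : Ω → α) (B : Ω → β) (C : Ω → γ) : Prop :=
  ∀ (a : α) (b : β) (c : γ),
    pr p {ω | A ω = a ∧ B ω = b ∧ C ω = c} * pr p {ω | B ω = b} =
      pr p {ω | A ω = a ∧ B ω = b} * pr p {ω | B ω = b ∧ C ω = c}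

/-- Conditional Shannon entropy `H(A | B)`. -/
noncomputable def condEnt {Ω α β : Type*} [Fintype Ω] [Fintype α] [Fintype β]
    (p : Ω → ℝ) (A : Ω → α) (B : Ω → β) : ℝ :=
  -∑ a : α, ∑ b : β,
    pr p {ω | A ω = a ∧ B ω = b} *
      Real.log (pr p {ω | A ω = a ∧ B ω = b} / pr p {ω | B ω = b})

/-- Mutual information `I(A ; B)`. -/
noncomputable def mutInfo {Ω α β : Type*} [Fintype Ω] [Fintype α] [Fintype β]
    (p : Ω → ℝ) (A : Ω → α) (B : Ω → β) : ℝ :=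
  ∑ a : α, ∑ b : β,
    pr p {ω | A ω = a ∧ B ω = b} *
      Real.log (pr p {ω | A ω = a ∧ B ω = b} /
        (pr p {ω | A ω = a} * pr p {ω | B ω = b}))

/-- Conditional mutual information `I(A ; B | C) = H(A|C) - H(A|B,C)`. -/
noncomputable def condMI {Ω α β γ : Type*} [Fintype Ω] [Fintype α] [Fintype β] [Fintype γ]
    (p : Ω → ℝ) (A : Ω → α) (B : Ω → β) (C : Ω → γ) : ℝ :=
  condEnt p A C - condEnt p A (fun ω => (B ω, C ω))

/-! ### Auxiliary lemmas -/

lemma pr_nonneg {Ω : Type*} [Fintype Ω] {p : Ω → ℝ} (hp : ∀ ω, 0 ≤ p ω) (s : Set Ω) :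
    0 ≤ pr p s := by
  apply Finset.sum_nonneg; intro ω _
  by_cases h : ω ∈ s <;> simp [h, hp ω]

lemma pr_mono {Ω : Type*} [Fintype Ω] {p : Ω → ℝ} (hp : ∀ ω, 0 ≤ p ω) {s t : Set Ω}
    (h : s ⊆ t) : pr p s ≤ pr p t := by
  apply Finset.sum_le_sum; intro ω _
  by_cases hs : ω ∈ s
  · simp [hs, h hs]
  · by_cases ht : ω ∈ t <;> simp [hs, ht, hp ω]

lemma pr_congr {Ω : Type*} [Fintype Ω] (p : Ω → ℝ) {s t : Set Ω}
    (h : ∀ ω, ω ∈ s ↔ ω ∈ t) : pr p s = pr p t := by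
  have : s = t := Set.ext h
  rw [this]

lemma pr_eq_zero {Ω : Type*} [Fintype Ω] (p : Ω → ℝ) {s : Set Ω}
    (h : ∀ ω, ω ∉ s) : pr p s = 0 := by
  apply Finset.sum_eq_zero; intro ω _; exact if_neg (h ω)

lemma pr_fiber_left {Ω α : Type*} [Fintype Ω] [Fintype α] (p : Ω → ℝ) (f : Ω → α)
    (Q : Ω → Prop) : ∑ a, pr p {ω | f ω = a ∧ Q ω} = pr p {ω | Q ω} := by
  unfold pr
  rw [Finset.sum_comm]
  refine Finset.sum_congr rfl fun ω _ => ?_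
  simp only [Set.mem_setOf_eq]
  by_cases hQ : Q ω <;> simp [hQ, Finset.sum_ite_eq]

lemma pr_fiber_right {Ω α : Type*} [Fintype Ω] [Fintype α] (p : Ω → ℝ) (f : Ω → α)
    (Q : Ω → Prop) : ∑ a, pr p {ω | Q ω ∧ f ω = a} = pr p {ω | Q ω} := by
  rw [← pr_fiber_left p f Q]
  exact Finset.sum_congr rfl fun a _ => pr_congr p (fun ω => and_comm)

lemma pr_total {Ω α : Type*} [Fintype Ω] [Fintype α] (p : Ω → ℝ) (f : Ω → α) :
    ∑ a, pr p {ω | f ω = a} = ∑ ω, p ω := by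
  have := pr_fiber_left p f (fun _ => True)
  simpa [pr] using this

lemma pr_comp_fiber {Ω α β : Type*} [Fintype Ω] [Fintype α] [Fintype β]
    (p : Ω → ℝ) (Y : Ω → α) (T : α → β) (t : β) (Q : Ω → Prop) :
    pr p {ω | T (Y ω) = t ∧ Q ω} =
      ∑ y ∈ Finset.univ.filter (fun y => T y = t), pr p {ω | Y ω = y ∧ Q ω} := by
  unfold pr
  rw [Finset.sum_comm]
  refine Finset.sum_congr rfl fun ω _ => ?_
  simp only [Set.mem_setOf_eq]
  by_cases hQ : Q ω
  · by_cases ht : T (Y ω) = t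
    · rw [if_pos ⟨ht, hQ⟩]
      simp only [hQ, and_true]
      rw [Finset.sum_ite_eq]
      simp [ht]
    · rw [if_neg (by tauto)]
      refine (Finset.sum_eq_zero fun y hy => ?_).symm
      rw [if_neg]
      rintro ⟨hy', _⟩
      exact ht (hy' ▸ (Finset.mem_filter.mp hy).2)
  · simp [hQ]

/-- Pointwise log-sum-type bound used in the data processing inequality. -/
lemma dpi_pointwise {q pY qU r s : ℝ} (hq0 : 0 ≤ q) (hpY : q ≤ pY) (hqU : q ≤ qU)
    (hr : q ≤ r) (hs : pY ≤ s) :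
    q - pY * r / s ≤
      q * Real.log (q / (pY * qU)) - q * Real.log (r / (s * qU)) := by
  rcases eq_or_lt_of_le hq0 with h | h
  · rw [← h]
    have h1 : 0 ≤ pY := le_trans hq0 hpY
    have h2 : 0 ≤ r := le_trans hq0 hr
    have h3 : 0 ≤ s := le_trans h1 hs
    have h4 : 0 ≤ pY * r / s := by positivity
    simp only [zero_mul, sub_self, zero_sub, neg_nonpos]
    linarith
  · have hpY' : 0 < pY := lt_of_lt_of_le h hpY
    have hqU' : 0 < qU := lt_of_lt_of_le h hqU
    have hr' : 0 < r := lt_of_lt_of_le h hr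
    have hs' : 0 < s := lt_of_lt_of_le hpY' hs
    have key : Real.log (q / (pY * qU)) - Real.log (r / (s * qU)) =
        Real.log ((q * s) / (pY * r)) := by
      rw [Real.log_div h.ne' (mul_ne_zero hpY'.ne' hqU'.ne'),
          Real.log_div hr'.ne' (mul_ne_zero hs'.ne' hqU'.ne'),
          Real.log_div (mul_ne_zero h.ne' hs'.ne') (mul_ne_zero hpY'.ne' hr'.ne'),
          Real.log_mul hpY'.ne' hqU'.ne', Real.log_mul hs'.ne' hqU'.ne',
          Real.log_mul h.ne' hs'.ne', Real.log_mul hpY'.ne' hr'.ne']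
      ring
    have hpos : 0 < (pY * r) / (q * s) := by positivity
    have hlog := Real.log_le_sub_one_of_pos hpos
    have hinv : Real.log ((q * s) / (pY * r)) = -Real.log ((pY * r) / (q * s)) := by
      rw [← Real.log_inv]
      congr 1
      field_simp
    have hge : 1 - (pY * r) / (q * s) ≤ Real.log ((q * s) / (pY * r)) := by
      rw [hinv]; linarith
    have hmul : q * (1 - (pY * r) / (q * s)) ≤ q * Real.log ((q * s) / (pY * r)) :=
      mul_le_mul_of_nonneg_left hge hq0
    have hid : q * (1 - (pY * r) / (q * s)) = q - pY * r / s := by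
      field_simp
    calc q - pY * r / s = q * (1 - (pY * r) / (q * s)) := hid.symm
      _ ≤ q * Real.log ((q * s) / (pY * r)) := hmul
      _ = q * Real.log (q / (pY * qU)) - q * Real.log (r / (s * qU)) := by
          rw [← key]; ring

/-- Key step of Theorem 6: from `X – Y – U` and `X – T(Y) – Y`, the long Markov chain
`X – T(Y) – Y – U` holds (here expressed as `X – T(Y) – (Y, U)`), hence `I(Y;U) ≥ I(T(Y);U)`
while `H(X|U)` is unchanged; in particular, every rate pair achievable with `Y` is achievable
with `T(Y)`. -/
theorem rate_pair_reduction_via_sufficiency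
    {Ω 𝒳 𝒴 𝒰 𝒯 : Type*} [Fintype Ω] [Fintype 𝒳] [Fintype 𝒴] [Fintype 𝒰] [Fintype 𝒯]
    (p : Ω → ℝ) (hp : IsPMF p)
    (X : Ω → 𝒳) (Y : Ω → 𝒴) (U : Ω → 𝒰) (T : 𝒴 → 𝒯)
    (h1 : MarkovChain p X Y U)
    (h2 : MarkovChain p X (fun ω => T (Y ω)) Y) :
    MarkovChain p X (fun ω => T (Y ω)) (fun ω => (Y ω, U ω)) ∧
      mutInfo p Y U ≥ mutInfo p (fun ω => T (Y ω)) U ∧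
      ∀ r : ℝ × ℝ, (condEnt p X U ≤ r.1 ∧ mutInfo p Y U ≤ r.2) →
        (condEnt p X U ≤ r.1 ∧ mutInfo p (fun ω => T (Y ω)) U ≤ r.2) := by
  obtain ⟨hp0, hp1⟩ := hp
  -- Part 1 : the long Markov chain
  have part1 : MarkovChain p X (fun ω => T (Y ω)) (fun ω => (Y ω, U ω)) := by
    rintro x t ⟨y, u⟩
    simp only [Prod.mk.injEq]
    by_cases hty : T y = t
    · subst hty
      have e1 : pr p {ω | X ω = x ∧ T (Y ω) = T y ∧ (Y ω = y ∧ U ω = u)} =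
          pr p {ω | X ω = x ∧ Y ω = y ∧ U ω = u} := by
        refine pr_congr p fun ω => ?_
        simp only [Set.mem_setOf_eq]
        constructor
        · rintro ⟨hx, -, hy, hu⟩; exact ⟨hx, hy, hu⟩
        · rintro ⟨hx, hy, hu⟩; exact ⟨hx, by rw [hy], hy, hu⟩
      have e2 : pr p {ω | T (Y ω) = T y ∧ (Y ω = y ∧ U ω = u)} =
          pr p {ω | Y ω = y ∧ U ω = u} := by
        refine pr_congr p fun ω => ?_
        simp only [Set.mem_setOf_eq]
        constructor
        · rintro ⟨-, hy, hu⟩; exact ⟨hy, hu⟩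
        · rintro ⟨hy, hu⟩; exact ⟨by rw [hy], hy, hu⟩
      rw [e1, e2]
      have hh2 : pr p {ω | X ω = x ∧ Y ω = y} * pr p {ω | T (Y ω) = T y} =
          pr p {ω | X ω = x ∧ T (Y ω) = T y} * pr p {ω | Y ω = y} := by
        have h := h2 x (T y) y
        have e3 : pr p {ω | X ω = x ∧ T (Y ω) = T y ∧ Y ω = y} =
            pr p {ω | X ω = x ∧ Y ω = y} := by
          refine pr_congr p fun ω => ?_
          simp only [Set.mem_setOf_eq]
          constructor
          · rintro ⟨hx, -, hy⟩; exact ⟨hx, hy⟩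
          · rintro ⟨hx, hy⟩; exact ⟨hx, by rw [hy], hy⟩
        have e4 : pr p {ω | T (Y ω) = T y ∧ Y ω = y} = pr p {ω | Y ω = y} := by
          refine pr_congr p fun ω => ?_
          simp only [Set.mem_setOf_eq]
          constructor
          · rintro ⟨-, hy⟩; exact hy
          · intro hy; exact ⟨by rw [hy], hy⟩
        rw [e3, e4] at h
        exact h
      by_cases hy : pr p {ω | Y ω = y} = 0
      · have hL : pr p {ω | X ω = x ∧ Y ω = y ∧ U ω = u} = 0 :=
          le_antisymm (hy ▸ pr_mono hp0 (fun ω hω => hω.2.1)) (pr_nonneg hp0 _)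
        have hR : pr p {ω | Y ω = y ∧ U ω = u} = 0 :=
          le_antisymm (hy ▸ pr_mono hp0 (fun ω hω => hω.1)) (pr_nonneg hp0 _)
        rw [hL, hR]; ring
      · apply mul_right_cancel₀ hy
        have h1' := h1 x y u
        linear_combination pr p {ω | T (Y ω) = T y} * h1' +
          pr p {ω | Y ω = y ∧ U ω = u} * hh2
    · have hL : pr p {ω | X ω = x ∧ T (Y ω) = t ∧ (Y ω = y ∧ U ω = u)} = 0 := by
        refine pr_eq_zero p fun ω => ?_
        rintro ⟨-, ht, hy, -⟩
        exact hty (hy ▸ ht)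
      have hR : pr p {ω | T (Y ω) = t ∧ (Y ω = y ∧ U ω = u)} = 0 := by
        refine pr_eq_zero p fun ω => ?_
        rintro ⟨ht, hy, -⟩
        exact hty (hy ▸ ht)
      rw [hL, hR]; ring
  -- Part 2 : data processing inequality
  have part2 : mutInfo p (fun ω => T (Y ω)) U ≤ mutInfo p Y U := by
    have stepA : mutInfo p (fun ω => T (Y ω)) U =
        ∑ y : 𝒴, ∑ u : 𝒰, pr p {ω | Y ω = y ∧ U ω = u} *
          Real.log (pr p {ω | T (Y ω) = T y ∧ U ω = u} /
            (pr p {ω | T (Y ω) = T y} * pr p {ω | U ω = u})) := by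
      unfold mutInfo
      rw [Finset.sum_comm]
      rw [show (∑ y : 𝒴, ∑ u : 𝒰, pr p {ω | Y ω = y ∧ U ω = u} *
          Real.log (pr p {ω | T (Y ω) = T y ∧ U ω = u} /
            (pr p {ω | T (Y ω) = T y} * pr p {ω | U ω = u}))) =
          ∑ u : 𝒰, ∑ y : 𝒴, pr p {ω | Y ω = y ∧ U ω = u} *
          Real.log (pr p {ω | T (Y ω) = T y ∧ U ω = u} /
            (pr p {ω | T (Y ω) = T y} * pr p {ω | U ω = u})) from Finset.sum_comm]
      refine Finset.sum_congr rfl fun u _ => ?_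
      rw [← Finset.sum_fiberwise Finset.univ T (fun y => pr p {ω | Y ω = y ∧ U ω = u} *
          Real.log (pr p {ω | T (Y ω) = T y ∧ U ω = u} /
            (pr p {ω | T (Y ω) = T y} * pr p {ω | U ω = u})))]
      refine Finset.sum_congr rfl fun t _ => ?_
      have hcongr : ∀ y ∈ Finset.univ.filter (fun y => T y = t),
          pr p {ω | Y ω = y ∧ U ω = u} *
          Real.log (pr p {ω | T (Y ω) = T y ∧ U ω = u} /
            (pr p {ω | T (Y ω) = T y} * pr p {ω | U ω = u})) =
          pr p {ω | Y ω = y ∧ U ω = u} *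
          Real.log (pr p {ω | T (Y ω) = t ∧ U ω = u} /
            (pr p {ω | T (Y ω) = t} * pr p {ω | U ω = u})) := by
        intro y hy
        rw [(Finset.mem_filter.mp hy).2]
      rw [Finset.sum_congr rfl hcongr, ← Finset.sum_mul,
        ← pr_comp_fiber p Y T t (fun ω => U ω = u)]
    rw [stepA, mutInfo, ← sub_nonneg, ← Finset.sum_sub_distrib]
    have sub_eq : ∀ y : 𝒴,
        (∑ u : 𝒰, pr p {ω | Y ω = y ∧ U ω = u} *
          Real.log (pr p {ω | Y ω = y ∧ U ω = u} /
            (pr p {ω | Y ω = y} * pr p {ω | U ω = u}))) -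
        (∑ u : 𝒰, pr p {ω | Y ω = y ∧ U ω = u} *
          Real.log (pr p {ω | T (Y ω) = T y ∧ U ω = u} /
            (pr p {ω | T (Y ω) = T y} * pr p {ω | U ω = u}))) =
        ∑ u : 𝒰, (pr p {ω | Y ω = y ∧ U ω = u} *
          Real.log (pr p {ω | Y ω = y ∧ U ω = u} /
            (pr p {ω | Y ω = y} * pr p {ω | U ω = u})) -
          pr p {ω | Y ω = y ∧ U ω = u} *
          Real.log (pr p {ω | T (Y ω) = T y ∧ U ω = u} /
            (pr p {ω | T (Y ω) = T y} * pr p {ω | U ω = u}))) :=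
      fun y => (Finset.sum_sub_distrib _ _).symm
    calc (0:ℝ) = (∑ y : 𝒴, pr p {ω | Y ω = y}) -
          ∑ y : 𝒴, pr p {ω | Y ω = y} := by ring
      _ ≤ ∑ y : 𝒴, ∑ u : 𝒰, (pr p {ω | Y ω = y ∧ U ω = u} -
            pr p {ω | Y ω = y} * pr p {ω | T (Y ω) = T y ∧ U ω = u} /
              pr p {ω | T (Y ω) = T y}) := by
          rw [show (∑ y : 𝒴, ∑ u : 𝒰, (pr p {ω | Y ω = y ∧ U ω = u} -
            pr p {ω | Y ω = y} * pr p {ω | T (Y ω) = T y ∧ U ω = u} /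
              pr p {ω | T (Y ω) = T y})) = (∑ y : 𝒴, ∑ u : 𝒰,
                pr p {ω | Y ω = y ∧ U ω = u}) - ∑ y : 𝒴, ∑ u : 𝒰,
                pr p {ω | Y ω = y} * pr p {ω | T (Y ω) = T y ∧ U ω = u} /
              pr p {ω | T (Y ω) = T y} from by
            rw [← Finset.sum_sub_distrib]
            exact Finset.sum_congr rfl fun y _ => Finset.sum_sub_distrib _ _]
          have hA : (∑ y : 𝒴, ∑ u : 𝒰, pr p {ω | Y ω = y ∧ U ω = u}) =
              ∑ y : 𝒴, pr p {ω | Y ω = y} :=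
            Finset.sum_congr rfl fun y _ => pr_fiber_right p U (fun ω => Y ω = y)
          rw [hA]
          have hB : ∀ y : 𝒴, (∑ u : 𝒰, pr p {ω | Y ω = y} *
              pr p {ω | T (Y ω) = T y ∧ U ω = u} / pr p {ω | T (Y ω) = T y}) ≤
              pr p {ω | Y ω = y} := by
            intro y
            have : (∑ u : 𝒰, pr p {ω | Y ω = y} *
                pr p {ω | T (Y ω) = T y ∧ U ω = u} / pr p {ω | T (Y ω) = T y}) =
                pr p {ω | Y ω = y} * pr p {ω | T (Y ω) = T y} /
                  pr p {ω | T (Y ω) = T y} := by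
              rw [← Finset.sum_div, ← Finset.mul_sum,
                pr_fiber_right p U (fun ω => T (Y ω) = T y)]
            rw [this]
            by_cases hs : pr p {ω | T (Y ω) = T y} = 0
            · rw [hs]
              simp [pr_nonneg hp0]
            · rw [mul_div_assoc, div_self hs, mul_one]
          have := Finset.sum_le_sum (fun y (_ : y ∈ Finset.univ) => hB y)
          linarith
      _ ≤ ∑ y : 𝒴, ∑ u : 𝒰, (pr p {ω | Y ω = y ∧ U ω = u} *
            Real.log (pr p {ω | Y ω = y ∧ U ω = u} /
              (pr p {ω | Y ω = y} * pr p {ω | U ω = u})) -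
            pr p {ω | Y ω = y ∧ U ω = u} *
            Real.log (pr p {ω | T (Y ω) = T y ∧ U ω = u} /
              (pr p {ω | T (Y ω) = T y} * pr p {ω | U ω = u}))) := by
          refine Finset.sum_le_sum fun y _ => Finset.sum_le_sum fun u _ => ?_
          refine dpi_pointwise (pr_nonneg hp0 _) ?_ ?_ ?_ ?_
          · exact pr_mono hp0 (fun ω hω => hω.1)
          · exact pr_mono hp0 (fun ω hω => hω.2)
          · exact pr_mono hp0 (fun ω hω => ⟨by rw [hω.1], hω.2⟩)
          · exact pr_mono hp0 (fun ω hω => by rw [Set.mem_setOf_eq, hω])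
      _ = _ := by
          refine Finset.sum_congr rfl fun y _ => ?_
          exact (sub_eq y).symm
  refine ⟨part1, part2, fun r hr => ⟨hr.1, le_trans part2 hr.2⟩⟩
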